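/- arXiv:1307.6894 — 2 statements merged into one kernel-verified Lean document; each statement's English description precedes it below -/
import Mathlib

section
/- Let φ : X → Y and ψ : Y → Z be wiring diagrams, f ∈ P(X), g = P(φ)(f), and ω = ψ∘φ. Assume the induction hypothesis: S'_ω ∘ C_{ω,f} ∘ ∂ = (S'_φ × id_{⟪D_ψ⟫}) ∘ (C_{φ,f} × id_{⟪D_ψ⟫}) ∘ S'_ψ ∘ C_{ψ,g} ∘ ∂ as functions ⟪In Z⟫ → ⟪inDem ω⟫. Then C_{ψ,g} = (id_{⟪In Z⟫} × S''_φ × id_{⟪D_ψ⟫}) ∘ C_{ω,f} as functions ⟪In Z⟫ → ⟪Sup ψ⟫ (using the identification Sup(ω) = In Z ⊔ inSup(φ) ⊔ D_ψ and Sup(ψ) = In Z ⊔ Out Y ⊔ D_ψ). -/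
universe u

/-- A function `f : List R → List S` is *n-historical* if it sends lists of length `t`
to lists of length `t + n`, and it commutes with the operation `∂ = List.dropLast`
of dropping the last entry of a nonempty list. -/
def Historical {R S : Type u} (n : ℕ) (f : List R → List S) : Prop :=
  (∀ ℓ : List R, (f ℓ).length = ℓ.length + n) ∧
    ∀ ℓ : List R, 1 ≤ ℓ.length → (f ℓ).dropLast = f ℓ.dropLast

/-- Glue a tuple of values indexed by `α` and a tuple of values indexed by `β` into a
tuple of values indexed by `α ⊕ β`.  (This realizes the "zipwith" identification of
lists over a disjoint union of wire sets with pairs of equal-length lists.) -/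
def glue {α β : Type} {F : α → Type u} {G : β → Type u}
    (a : ∀ x, F x) (b : ∀ y, G y) : ∀ w : α ⊕ β, Sum.elim F G w
  | Sum.inl x => a x
  | Sum.inr y => b y

/-- The product `p × q` of two functions between lists of tuples, acting on lists of
tuples indexed by disjoint unions of wire sets. -/
def prodMap {α α' β β' : Type} {F : α → Type u} {F' : α' → Type u}
    {G : β → Type u} {G' : β' → Type u}
    (p : List (∀ a, F a) → List (∀ a, F' a))
    (q : List (∀ b, G b) → List (∀ b, G' b)) :
    List (∀ w : α ⊕ β, Sum.elim F G w) → List (∀ w : α' ⊕ β', Sum.elim F' G' w) :=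
  fun ℓ =>
    List.zipWith glue (p (ℓ.map fun x a => x (Sum.inl a)))
      (q (ℓ.map fun x b => x (Sum.inr b)))

/-- A wiring diagram from a black box `X` (wires `InX`, `OutX`) to a black box `Y`
(wires `InY`, `OutY`), where a wire `w` carries the pointed value set `v- w`.
It consists of a finite set `D` of delay nodes carrying pointed value sets
(`vD` with default values `dD`), together with a supplier assignment
`s : Dem → Sup` (with `Dem = OutY ⊕ InX ⊕ D` and `Sup = InY ⊕ OutX ⊕ D`) that
preserves value sets (`compat`) and satisfies non-instantaneity: on `OutY` it lands
in `OutX ⊕ D` (witnessed by `sOut` and `noninst`). -/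
structure WD (InX OutX InY OutY : Type)
    (vInX : InX → Type u) (vOutX : OutX → Type u)
    (vInY : InY → Type u) (vOutY : OutY → Type u) where
  D : Type
  [fintypeD : Fintype D]
  vD : D → Type u
  dD : ∀ d, vD d
  s : OutY ⊕ InX ⊕ D → InY ⊕ OutX ⊕ D
  sOut : OutY → OutX ⊕ D
  noninst : ∀ z, s (Sum.inl z) = Sum.inr (sOut z)
  compat : ∀ w, Sum.elim vInY (Sum.elim vOutX vD) (s w)
      = Sum.elim vOutY (Sum.elim vInX vD) w

attribute [instance] WD.fintypeD

namespace WD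

variable {InX OutX InY OutY InZ OutZ : Type}
  {vInX : InX → Type u} {vOutX : OutX → Type u}
  {vInY : InY → Type u} {vOutY : OutY → Type u}
  {vInZ : InZ → Type u} {vOutZ : OutZ → Type u}

/-- The value sets carried by the supply wires `Sup(φ) = InY ⊕ OutX ⊕ D_φ`. -/
def vSup (φ : WD InX OutX InY OutY vInX vOutX vInY vOutY) :
    InY ⊕ OutX ⊕ φ.D → Type u :=
  Sum.elim vInY (Sum.elim vOutX φ.vD)

/-- The shuttle function `S'_φ : ⟪Sup φ⟫ → ⟪inDem φ⟫`, sending the values on the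
supply wires to the internal demand wires `inDem(φ) = InX ⊕ D_φ` along the supplier
assignment, entrywise in time. -/
def S' (φ : WD InX OutX InY OutY vInX vOutX vInY vOutY) :
    List (∀ w, φ.vSup w) → List (∀ w : InX ⊕ φ.D, Sum.elim vInX φ.vD w) :=
  List.map fun x w => cast (φ.compat (Sum.inr w)) (x (φ.s (Sum.inr w)))

/-- The shuttle function `S''_φ : ⟪inSup φ⟫ → ⟪Out Y⟫`, reading off the values
demanded by the global outputs `OutY` from the internal supply wires
`inSup(φ) = OutX ⊕ D_φ` (well defined by non-instantaneity). -/
def S'' (φ : WD InX OutX InY OutY vInX vOutX vInY vOutY) :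
    List (∀ w : OutX ⊕ φ.D, Sum.elim vOutX φ.vD w) → List (∀ z, vOutY z) :=
  List.map fun y z =>
    cast ((congrArg φ.vSup (φ.noninst z)).symm.trans (φ.compat (Sum.inl z)))
      (y (φ.sOut z))

/-- The evaluation function `E_{φ,f} = f × δ¹ : ⟪inDem φ⟫ → ⟪inSup φ⟫`, applying the
propagator `f` on the `InX` coordinates and the 1-moment delay (prepending the
default value) on the delay coordinates. -/
def E (φ : WD InX OutX InY OutY vInX vOutX vInY vOutY)
    (f : List (∀ i, vInX i) → List (∀ o, vOutX o)) :
    List (∀ w : InX ⊕ φ.D, Sum.elim vInX φ.vD w) →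
      List (∀ w : OutX ⊕ φ.D, Sum.elim vOutX φ.vD w) :=
  fun ℓ =>
    List.zipWith glue (f (ℓ.map fun x i => x (Sum.inl i)))
      (φ.dD :: ℓ.map fun x d => x (Sum.inr d))

/-- The cascade `C_{φ,f} : ⟪In Y⟫ → ⟪Sup φ⟫`, defined by recursion on the length:
`C([]) = []` and `C(ℓ) = ℓ ⋎ E_{φ,f}(S'_φ(C(∂ℓ)))` for nonempty `ℓ`. -/
def C (φ : WD InX OutX InY OutY vInX vOutX vInY vOutY)
    (f : List (∀ i, vInX i) → List (∀ o, vOutX o)) :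
    List (∀ i, vInY i) → List (∀ w, φ.vSup w)
  | [] => []
  | a :: as => List.zipWith glue (a :: as) (φ.E f (φ.S' (φ.C f (a :: as).dropLast)))
termination_by ℓ => ℓ.length
decreasing_by simp [List.length_dropLast]

/-- The propagator `P(φ)(f) = S''_φ ∘ E_{φ,f} ∘ S'_φ ∘ C_{φ,f} : ⟪In Y⟫ → ⟪Out Y⟫`
obtained by filling the inner box of `φ` with the propagator `f`. -/
def P (φ : WD InX OutX InY OutY vInX vOutX vInY vOutY)
    (f : List (∀ i, vInX i) → List (∀ o, vOutX o)) :
    List (∀ i, vInY i) → List (∀ z, vOutY z) :=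
  fun ℓ => φ.S'' (φ.E f (φ.S' (φ.C f ℓ)))

/-- The map `f̄ : Sup(ψ) → Sup(ψ∘φ)`: the identity on `In Z` and `D_ψ`, and equal to
`s_φ|_{Out Y}` on `Out Y`. -/
def fbar (ψ : WD InY OutY InZ OutZ vInY vOutY vInZ vOutZ)
    (φ : WD InX OutX InY OutY vInX vOutX vInY vOutY) :
    InZ ⊕ OutY ⊕ ψ.D → InZ ⊕ OutX ⊕ (φ.D ⊕ ψ.D)
  | Sum.inl z => Sum.inl z
  | Sum.inr (Sum.inl o) =>
      match φ.sOut o with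
      | Sum.inl x => Sum.inr (Sum.inl x)
      | Sum.inr d => Sum.inr (Sum.inr (Sum.inl d))
  | Sum.inr (Sum.inr d) => Sum.inr (Sum.inr (Sum.inr d))

/-- The map `h : Sup(φ) → Sup(ψ∘φ)`: equal to `f̄ ∘ s_ψ|_{In Y}` on `In Y` and the
identity on `Out X` and `D_φ`. -/
def hmap (ψ : WD InY OutY InZ OutZ vInY vOutY vInZ vOutZ)
    (φ : WD InX OutX InY OutY vInX vOutX vInY vOutY) :
    InY ⊕ OutX ⊕ φ.D → InZ ⊕ OutX ⊕ (φ.D ⊕ ψ.D)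
  | Sum.inl i => fbar ψ φ (ψ.s (Sum.inr (Sum.inl i)))
  | Sum.inr (Sum.inl x) => Sum.inr (Sum.inl x)
  | Sum.inr (Sum.inr d) => Sum.inr (Sum.inr (Sum.inl d))

/-- The restriction of `f̄` to `Out Y ⊔ D_ψ`, landing in the internal supplies of the
composite. -/
def fbarOut (ψ : WD InY OutY InZ OutZ vInY vOutY vInZ vOutZ)
    (φ : WD InX OutX InY OutY vInX vOutX vInY vOutY) :
    OutY ⊕ ψ.D → OutX ⊕ (φ.D ⊕ ψ.D)
  | Sum.inl o =>
      match φ.sOut o with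
      | Sum.inl x => Sum.inl x
      | Sum.inr d => Sum.inr (Sum.inl d)
  | Sum.inr d => Sum.inr (Sum.inr d)

theorem fbar_inr (ψ : WD InY OutY InZ OutZ vInY vOutY vInZ vOutZ)
    (φ : WD InX OutX InY OutY vInX vOutX vInY vOutY) (u : OutY ⊕ ψ.D) :
    fbar ψ φ (Sum.inr u) = Sum.inr (fbarOut ψ φ u) := by
  rcases u with o | d
  · rcases h : φ.sOut o with x | d <;> simp [fbar, fbarOut, h]
  · rfl

theorem vSup_fbar (ψ : WD InY OutY InZ OutZ vInY vOutY vInZ vOutZ)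
    (φ : WD InX OutX InY OutY vInX vOutX vInY vOutY) (u : InZ ⊕ OutY ⊕ ψ.D) :
    Sum.elim vInZ (Sum.elim vOutX (Sum.elim φ.vD ψ.vD)) (fbar ψ φ u)
      = Sum.elim vInZ (Sum.elim vOutY ψ.vD) u := by
  rcases u with z | u
  · rfl
  rcases u with o | d
  · have h0 := (congrArg (Sum.elim vInY (Sum.elim vOutX φ.vD))
      (φ.noninst o)).symm.trans (φ.compat (Sum.inl o))
    rcases h : φ.sOut o with x | d
    · rw [h] at h0
      simpa [fbar, h] using h0
    · rw [h] at h0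
      simpa [fbar, h] using h0
  · rfl

theorem vSup_hmap (ψ : WD InY OutY InZ OutZ vInY vOutY vInZ vOutZ)
    (φ : WD InX OutX InY OutY vInX vOutX vInY vOutY) (u : InY ⊕ OutX ⊕ φ.D) :
    Sum.elim vInZ (Sum.elim vOutX (Sum.elim φ.vD ψ.vD)) (hmap ψ φ u)
      = Sum.elim vInY (Sum.elim vOutX φ.vD) u := by
  rcases u with i | u
  · exact (vSup_fbar ψ φ (ψ.s (Sum.inr (Sum.inl i)))).trans
      (ψ.compat (Sum.inr (Sum.inl i)))
  rcases u with x | d <;> rfl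

/-- The composite wiring diagram `ψ ∘ φ : X → Z` of `φ : X → Y` and `ψ : Y → Z`,
with delay nodes `D_φ ⊔ D_ψ`, whose supplier assignment is `h ∘ s_φ` on `In X ⊔ D_φ`
and `f̄ ∘ s_ψ` on `Out Z ⊔ D_ψ`. -/
def comp (ψ : WD InY OutY InZ OutZ vInY vOutY vInZ vOutZ)
    (φ : WD InX OutX InY OutY vInX vOutX vInY vOutY) :
    WD InX OutX InZ OutZ vInX vOutX vInZ vOutZ where
  D := φ.D ⊕ ψ.D
  vD := Sum.elim φ.vD ψ.vD
  dD := fun d =>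
    match d with
    | Sum.inl d => φ.dD d
    | Sum.inr d => ψ.dD d
  s := fun w =>
    match w with
    | Sum.inl z => fbar ψ φ (ψ.s (Sum.inl z))
    | Sum.inr (Sum.inl i) => hmap ψ φ (φ.s (Sum.inr (Sum.inl i)))
    | Sum.inr (Sum.inr (Sum.inl d)) => hmap ψ φ (φ.s (Sum.inr (Sum.inr d)))
    | Sum.inr (Sum.inr (Sum.inr d)) => fbar ψ φ (ψ.s (Sum.inr (Sum.inr d)))
  sOut := fun z => fbarOut ψ φ (ψ.sOut z)
  noninst := fun z => by
    show fbar ψ φ (ψ.s (Sum.inl z)) = _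
    rw [ψ.noninst z, fbar_inr]
  compat := fun w => by
    rcases w with z | w
    · exact (vSup_fbar ψ φ (ψ.s (Sum.inl z))).trans (ψ.compat (Sum.inl z))
    rcases w with i | d
    · exact (vSup_hmap ψ φ (φ.s (Sum.inr (Sum.inl i)))).trans
        (φ.compat (Sum.inr (Sum.inl i)))
    rcases d with d | d
    · exact (vSup_hmap ψ φ (φ.s (Sum.inr (Sum.inr d)))).trans
        (φ.compat (Sum.inr (Sum.inr d)))
    · exact (vSup_fbar ψ φ (ψ.s (Sum.inr (Sum.inr d)))).trans
        (ψ.compat (Sum.inr (Sum.inr d)))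

end WD

namespace WD

variable {InX OutX InY OutY InZ OutZ : Type}
  {vInX : InX → Type u} {vOutX : OutX → Type u}
  {vInY : InY → Type u} {vOutY : OutY → Type u}
  {vInZ : InZ → Type u} {vOutZ : OutZ → Type u}

/-- The canonical identification `Sup(ψ∘φ) = In Z ⊔ ((Out X ⊔ D_φ) ⊔ D_ψ)
= In Z ⊔ inSup(φ) ⊔ D_ψ`, entrywise on tuples of values. -/
def reassocSup (ψ : WD InY OutY InZ OutZ vInY vOutY vInZ vOutZ)
    (φ : WD InX OutX InY OutY vInX vOutX vInY vOutY)
    (x : ∀ w : InZ ⊕ OutX ⊕ (φ.D ⊕ ψ.D),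
      Sum.elim vInZ (Sum.elim vOutX (Sum.elim φ.vD ψ.vD)) w) :
    ∀ w : InZ ⊕ ((OutX ⊕ φ.D) ⊕ ψ.D),
      Sum.elim vInZ (Sum.elim (Sum.elim vOutX φ.vD) ψ.vD) w
  | Sum.inl z => x (Sum.inl z)
  | Sum.inr (Sum.inl (Sum.inl o)) => x (Sum.inr (Sum.inl o))
  | Sum.inr (Sum.inl (Sum.inr d)) => x (Sum.inr (Sum.inr (Sum.inl d)))
  | Sum.inr (Sum.inr d) => x (Sum.inr (Sum.inr (Sum.inr d)))

/-- The canonical identification `inDem(φ) ⊔ D_ψ = (In X ⊔ D_φ) ⊔ D_ψ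
= In X ⊔ (D_φ ⊔ D_ψ) = inDem(ψ∘φ)`, entrywise on tuples of values. -/
def reassocDem (ψ : WD InY OutY InZ OutZ vInY vOutY vInZ vOutZ)
    (φ : WD InX OutX InY OutY vInX vOutX vInY vOutY)
    (x : ∀ w : (InX ⊕ φ.D) ⊕ ψ.D, Sum.elim (Sum.elim vInX φ.vD) ψ.vD w) :
    ∀ w : InX ⊕ (φ.D ⊕ ψ.D), Sum.elim vInX (Sum.elim φ.vD ψ.vD) w
  | Sum.inl i => x (Sum.inl (Sum.inl i))
  | Sum.inr (Sum.inl d) => x (Sum.inl (Sum.inr d))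
  | Sum.inr (Sum.inr d) => x (Sum.inr d)

end WD


section Helpers

theorem map_inl_zip {α β : Type} {F : α → Type u} {G : β → Type u} :
    ∀ (A : List (∀ a, F a)) (B : List (∀ b, G b)), A.length ≤ B.length →
      (List.zipWith glue A B).map (fun x a => x (Sum.inl a)) = A
  | [], _, _ => by simp; rfl
  | a :: A, b :: B, h => by
      simp only [List.zipWith_cons_cons, List.map_cons, List.cons.injEq]
      exact congrArg₂ List.cons rfl (map_inl_zip A B (by simpa using h))
  | a :: A, [], h => by simp at h

theorem map_inr_zip {α β : Type} {F : α → Type u} {G : β → Type u} :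
    ∀ (A : List (∀ a, F a)) (B : List (∀ b, G b)), B.length ≤ A.length →
      (List.zipWith glue A B).map (fun x b => x (Sum.inr b)) = B
  | _, [], _ => by simp; rfl
  | a :: A, b :: B, h => by
      simp only [List.zipWith_cons_cons, List.map_cons, List.cons.injEq]
      exact congrArg₂ List.cons rfl (map_inr_zip A B (by simpa using h))
  | [], b :: B, h => by simp at h

theorem prodMap_glue {α α' β β' : Type} {F : α → Type u} {F' : α' → Type u}
    {G : β → Type u} {G' : β' → Type u}
    (p : List (∀ a, F a) → List (∀ a, F' a))
    (q : List (∀ b, G b) → List (∀ b, G' b))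
    (A : List (∀ a, F a)) (B : List (∀ b, G b)) (h : A.length = B.length) :
    prodMap p q (List.zipWith glue A B) = List.zipWith glue (p A) (q B) := by
  unfold prodMap
  erw [map_inl_zip A B h.le, map_inr_zip A B h.ge]

namespace WD

variable {InX OutX InY OutY InZ OutZ : Type}
  {vInX : InX → Type u} {vOutX : OutX → Type u}
  {vInY : InY → Type u} {vOutY : OutY → Type u}
  {vInZ : InZ → Type u} {vOutZ : OutZ → Type u}

theorem C_nil (φ : WD InX OutX InY OutY vInX vOutX vInY vOutY)
    (f : List (∀ i, vInX i) → List (∀ o, vOutX o)) :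
    φ.C f [] = [] := by
  rw [C]

theorem C_ne_nil (φ : WD InX OutX InY OutY vInX vOutX vInY vOutY)
    (f : List (∀ i, vInX i) → List (∀ o, vOutX o)) :
    ∀ (ℓ : List (∀ i, vInY i)), ℓ ≠ [] →
      φ.C f ℓ = List.zipWith glue ℓ (φ.E f (φ.S' (φ.C f ℓ.dropLast)))
  | [], h => absurd rfl h
  | a :: as, _ => by rw [C]; rfl

theorem C_len (φ : WD InX OutX InY OutY vInX vOutX vInY vOutY)
    (f : List (∀ i, vInX i) → List (∀ o, vOutX o))
    (hf : ∀ m, (f m).length = m.length + 1) (ℓ : List (∀ i, vInY i)) :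
    (φ.C f ℓ).length = ℓ.length := by
  induction ℓ using List.reverseRecOn with
  | nil => rw [C_nil]; rfl
  | append_singleton as a ih =>
    erw [C_ne_nil φ f _ (by simp), List.length_zipWith, List.dropLast_concat]
    simp only [E, S', List.length_zipWith, List.length_map, List.length_cons,
      List.length_append, List.length_singleton, List.length_nil, hf, ih]
    erw [List.length_map, List.length_map, List.length_map, List.length_map, ih]
    omega

theorem P_len (φ : WD InX OutX InY OutY vInX vOutX vInY vOutY)
    (f : List (∀ i, vInX i) → List (∀ o, vOutX o))
    (hf : ∀ m, (f m).length = m.length + 1) (m : List (∀ i, vInY i)) :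
    (φ.P f m).length = m.length + 1 := by
  simp only [P, S'', E, S', List.length_map, List.length_zipWith,
    List.length_cons, hf, C_len φ f hf]
  erw [List.length_map, List.length_map, List.length_map, List.length_map, C_len φ f hf]
  omega

theorem reassocSup_glue (ψ : WD InY OutY InZ OutZ vInY vOutY vInZ vOutZ)
    (φ : WD InX OutX InY OutY vInX vOutX vInY vOutY)
    (a : ∀ z, vInZ z) (x : ∀ o, vOutX o) (b : ∀ d, φ.vD d) (c : ∀ d, ψ.vD d) :
    reassocSup ψ φ (glue a (glue x (glue b c))) = glue a (glue (glue x b) c) := by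
  funext w
  rcases w with z | (o | d) | d <;> rfl

theorem map_reassocSup_zip (ψ : WD InY OutY InZ OutZ vInY vOutY vInZ vOutZ)
    (φ : WD InX OutX InY OutY vInX vOutX vInY vOutY) :
    ∀ (L : List (∀ z, vInZ z)) (F : List (∀ o, vOutX o))
      (G₁ : List (∀ d, φ.vD d)) (G₂ : List (∀ d, ψ.vD d)),
    (List.zipWith glue L (List.zipWith glue F (List.zipWith glue G₁ G₂))).map
        (reassocSup ψ φ)
      = List.zipWith glue L (List.zipWith glue (List.zipWith glue F G₁) G₂)
  | [], _, _, _ => by simp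
  | _ :: _, [], _, _ => by simp
  | _ :: _, _ :: _, [], _ => by simp
  | _ :: _, _ :: _, _ :: _, [] => by simp
  | a :: L, x :: F, b :: G₁, c :: G₂ => by
      simp only [List.zipWith_cons_cons, List.map_cons]
      rw [map_reassocSup_zip ψ φ L F G₁ G₂, reassocSup_glue]

theorem map_proj1_reassocDem (ψ : WD InY OutY InZ OutZ vInY vOutY vInZ vOutZ)
    (φ : WD InX OutX InY OutY vInX vOutX vInY vOutY) :
    ∀ (B : List (∀ w : InX ⊕ φ.D, Sum.elim vInX φ.vD w)) (Cl : List (∀ d, ψ.vD d)),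
      B.length ≤ Cl.length →
      ((List.zipWith glue B Cl).map (reassocDem ψ φ)).map (fun x i => x (Sum.inl i))
        = B.map (fun x i => x (Sum.inl i))
  | [], _, _ => by simp; rfl
  | b :: B, c :: Cl, h => by
      simp only [List.zipWith_cons_cons, List.map_cons, List.cons.injEq]
      exact congrArg₂ List.cons rfl (map_proj1_reassocDem ψ φ B Cl (by simpa using h))
  | b :: B, [], h => by simp at h

theorem map_proj2_reassocDem (ψ : WD InY OutY InZ OutZ vInY vOutY vInZ vOutZ)
    (φ : WD InX OutX InY OutY vInX vOutX vInY vOutY) :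
    ∀ (B : List (∀ w : InX ⊕ φ.D, Sum.elim vInX φ.vD w)) (Cl : List (∀ d, ψ.vD d)),
      ((List.zipWith glue B Cl).map (reassocDem ψ φ)).map (fun x w => x (Sum.inr w))
        = List.zipWith glue (B.map fun x d => x (Sum.inr d)) Cl
  | [], _ => by simp; rfl
  | b :: B, [] => by simp; rfl
  | b :: B, c :: Cl => by
      simp only [List.zipWith_cons_cons, List.map_cons, List.cons.injEq]
      refine congrArg₂ List.cons ?_ (map_proj2_reassocDem ψ φ B Cl)
      funext w
      rcases w with d | d <;> rfl

theorem comp_dD (ψ : WD InY OutY InZ OutZ vInY vOutY vInZ vOutZ)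
    (φ : WD InX OutX InY OutY vInX vOutX vInY vOutY) :
    (ψ.comp φ).dD = glue φ.dD ψ.dD := by
  funext d
  rcases d with d | d <;> rfl

theorem E_comp_glue (ψ : WD InY OutY InZ OutZ vInY vOutY vInZ vOutZ)
    (φ : WD InX OutX InY OutY vInX vOutX vInY vOutY)
    (f : List (∀ i, vInX i) → List (∀ o, vOutX o))
    (B : List (∀ w : InX ⊕ φ.D, Sum.elim vInX φ.vD w)) (Cl : List (∀ d, ψ.vD d))
    (h : B.length = Cl.length) :
    (ψ.comp φ).E f ((List.zipWith glue B Cl).map (reassocDem ψ φ))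
      = List.zipWith glue (f (B.map fun x i => x (Sum.inl i)))
          (List.zipWith glue (φ.dD :: B.map fun x d => x (Sum.inr d))
            (ψ.dD :: Cl)) := by
  show List.zipWith glue
      (f (((List.zipWith glue B Cl).map (reassocDem ψ φ)).map
        (fun x i => x (Sum.inl i))))
      ((ψ.comp φ).dD :: ((List.zipWith glue B Cl).map (reassocDem ψ φ)).map
        (fun x w => x (Sum.inr w))) = _
  erw [map_proj1_reassocDem ψ φ B Cl h.le, comp_dD, List.zipWith_cons_cons]
  exact congrArg
    (fun Y => List.zipWith glue (f (B.map fun x i => x (Sum.inl i)))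
      ((glue φ.dD ψ.dD : ∀ w : φ.D ⊕ ψ.D, Sum.elim φ.vD ψ.vD w) :: Y))
    (map_proj2_reassocDem ψ φ B Cl)

end WD

end Helpers

open WD in
/-- Let `φ : X → Y`, `ψ : Y → Z` be wiring diagrams, `f ∈ P(X)`, `g = P(φ)(f)` and
`ω = ψ∘φ`.  Assuming the induction hypothesis
`S'_ω ∘ C_{ω,f} ∘ ∂ = (S'_φ × id) ∘ (C_{φ,f} × id) ∘ S'_ψ ∘ C_{ψ,g} ∘ ∂`,
one has `C_{ψ,g} = (id × S''_φ × id) ∘ C_{ω,f}` as functions `⟪In Z⟫ → ⟪Sup ψ⟫`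
(using the identification `Sup(ω) = In Z ⊔ inSup(φ) ⊔ D_ψ`). -/
theorem cascade_comp {InX OutX InY OutY InZ OutZ : Type}
    [Fintype InX] [Fintype OutX] [Fintype InY] [Fintype OutY]
    [Fintype InZ] [Fintype OutZ]
    {vInX : InX → Type u} {vOutX : OutX → Type u}
    {vInY : InY → Type u} {vOutY : OutY → Type u}
    {vInZ : InZ → Type u} {vOutZ : OutZ → Type u}
    (φ : WD InX OutX InY OutY vInX vOutX vInY vOutY)
    (ψ : WD InY OutY InZ OutZ vInY vOutY vInZ vOutZ)
    (f : List (∀ i, vInX i) → List (∀ o, vOutX o))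
    (hf : Historical 1 f)
    (hIH : (fun ℓ : List (∀ z, vInZ z) =>
        (ψ.comp φ).S' ((ψ.comp φ).C f ℓ.dropLast))
      = fun ℓ : List (∀ z, vInZ z) =>
        (prodMap φ.S' (id : List (∀ d, ψ.vD d) → List (∀ d, ψ.vD d))
          (prodMap (φ.C f) (id : List (∀ d, ψ.vD d) → List (∀ d, ψ.vD d))
            (ψ.S' (ψ.C (φ.P f) ℓ.dropLast)))).map (reassocDem ψ φ)) :
    ψ.C (φ.P f)
      = fun ℓ : List (∀ z, vInZ z) =>
          prodMap (id : List (∀ z, vInZ z) → List (∀ z, vInZ z))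
            (prodMap φ.S'' (id : List (∀ d, ψ.vD d) → List (∀ d, ψ.vD d)))
            (((ψ.comp φ).C f ℓ).map (reassocSup ψ φ)) := by
  have hfl : ∀ m, (f m).length = m.length + 1 := hf.1
  have hgl := P_len φ f hfl
  funext ℓ
  show ψ.C (φ.P f) ℓ
      = prodMap (id : List (∀ z, vInZ z) → List (∀ z, vInZ z))
          (prodMap φ.S'' (id : List (∀ d, ψ.vD d) → List (∀ d, ψ.vD d)))
          (((ψ.comp φ).C f ℓ).map (reassocSup ψ φ))
  cases ℓ with
  | nil => rw [C_nil, C_nil]; rfl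
  | cons a as =>
    have hIH' : (ψ.comp φ).S' ((ψ.comp φ).C f (a :: as).dropLast)
        = (prodMap φ.S' (id : List (∀ d, ψ.vD d) → List (∀ d, ψ.vD d))
            (prodMap (φ.C f) (id : List (∀ d, ψ.vD d) → List (∀ d, ψ.vD d))
              (ψ.S' (ψ.C (φ.P f) (a :: as).dropLast)))).map (reassocDem ψ φ) :=
      congrFun hIH (a :: as)
    rw [C_ne_nil ψ (φ.P f) _ (by simp), C_ne_nil (ψ.comp φ) f _ (by simp), hIH']
    set u := ψ.S' (ψ.C (φ.P f) (a :: as).dropLast) with hu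
    have hul : u.length = as.length := by
      rw [hu]; simp [S', C_len ψ _ hgl]
    have e1 : prodMap (φ.C f) (id : List (∀ d, ψ.vD d) → List (∀ d, ψ.vD d)) u
        = List.zipWith glue (φ.C f (u.map fun x i => x (Sum.inl i)))
            (u.map fun x d => x (Sum.inr d)) := rfl
    rw [e1]
    set A := φ.C f (u.map fun x i => x (Sum.inl i)) with hA
    set u₂ := u.map (fun x d => x (Sum.inr d)) with hu₂
    have hAl : A.length = u.length := by erw [hA, C_len φ f hfl, List.length_map]
    have hu₂l : u₂.length = u.length := by rw [hu₂, List.length_map]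
    erw [prodMap_glue φ.S' _ A u₂ (by omega)]
    erw [id_eq]
    set B := φ.S' A with hB
    have hBl : B.length = u.length := by rw [hB, S', List.length_map, hAl]
    erw [E_comp_glue ψ φ f B u₂ (hBl.trans hu₂l.symm), map_reassocSup_zip]
    have hlen1 : (f (B.map fun x i => x (Sum.inl i))).length = u.length + 1 := by
      erw [hfl, List.length_map, hBl]
    set F : List (∀ o, vOutX o) := f (B.map fun x i => x (Sum.inl i)) with hF
    set G₁ : List (∀ d, φ.vD d) := φ.dD :: B.map (fun x d => x (Sum.inr d)) with hG₁
    have hFl : F.length = u.length + 1 := by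
      erw [hF, hfl, List.length_map, hBl]
    have hG₁l : G₁.length = u.length + 1 := by
      erw [hG₁, List.length_cons, List.length_map, hBl]
    erw [prodMap_glue (id : List (∀ z, vInZ z) → List (∀ z, vInZ z))
      (prodMap φ.S'' (id : List (∀ d, ψ.vD d) → List (∀ d, ψ.vD d)))
      (a :: as) (List.zipWith glue (List.zipWith glue F G₁) (ψ.dD :: u₂))
      (by simp only [List.length_zipWith, List.length_cons, hFl, hG₁l, hu₂l, hul]; erw [List.length_cons, hu₂l, hul]; omega)]
    erw [prodMap_glue φ.S'' (id : List (∀ d, ψ.vD d) → List (∀ d, ψ.vD d))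
      (List.zipWith glue F G₁) (ψ.dD :: u₂)
      (by simp only [List.length_zipWith, List.length_cons, hFl, hG₁l, hu₂l]; erw [List.length_cons, hu₂l]; omega)]
    simp only [id_eq]
    have e2 : ψ.E (φ.P f) u
        = List.zipWith glue (φ.S'' (List.zipWith glue F G₁)) (ψ.dD :: u₂) := by
      rw [hF, hG₁]; rfl
    erw [e2]
end

section
/- Let φ : X → Y and ψ : Y → Z be wiring diagrams, f ∈ P(X), g = P(φ)(f), and ω = ψ∘φ. Assume the induction hypothesis: S'_ω ∘ C_{ω,f} ∘ ∂ = (S'_φ × id_{⟪D_ψ⟫}) ∘ (C_{φ,f} × id_{⟪D_ψ⟫}) ∘ S'_ψ ∘ C_{ψ,g} ∘ ∂ as functions ⟪In Z⟫ → ⟪inDem ω⟫. Then π_{⟪inSup φ⟫} ∘ C_{ω,f} = π_{⟪inSup φ⟫} ∘ C_{φ,f} ∘ π_{⟪In Y⟫} ∘ S'_ψ ∘ C_{ψ,g} as functions ⟪In Z⟫ → ⟪inSup φ⟫, where π denotes entrywise coordinate projection onto the indicated wire coordinates. -/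
universe u

namespace WD

variable {InX OutX InY OutY InZ OutZ : Type}
  {vInX : InX → Type u} {vOutX : OutX → Type u}
  {vInY : InY → Type u} {vOutY : OutY → Type u}
  {vInZ : InZ → Type u} {vOutZ : OutZ → Type u}

/-- The coordinate projection `π_{inSup φ}` of a tuple of values on the supply wires
of the composite `ω = ψ∘φ` onto the internal supply wires `inSup(φ) = Out X ⊔ D_φ`
of `φ`. -/
def projInSupPhi (ψ : WD InY OutY InZ OutZ vInY vOutY vInZ vOutZ)
    (φ : WD InX OutX InY OutY vInX vOutX vInY vOutY)
    (x : ∀ w, (ψ.comp φ).vSup w) :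
    ∀ w : OutX ⊕ φ.D, Sum.elim vOutX φ.vD w
  | Sum.inl o => x (Sum.inr (Sum.inl o))
  | Sum.inr d => x (Sum.inr (Sum.inr (Sum.inl d)))

end WD


section Aux

theorem zipWith_fst_of_le {α β γ : Type*} (h : α → γ) :
    ∀ (l1 : List α) (l2 : List β), l1.length ≤ l2.length →
      List.zipWith (fun a _ => h a) l1 l2 = l1.map h
  | [], _, _ => by simp
  | _ :: _, [], hl => by simp at hl
  | a :: l1, b :: l2, hl => by
    simp only [List.zipWith_cons_cons, List.map_cons]
    rw [zipWith_fst_of_le h l1 l2 (by simpa using hl)]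

theorem zipWith_snd_of_le {α β γ : Type*} (h : β → γ) :
    ∀ (l1 : List α) (l2 : List β), l2.length ≤ l1.length →
      List.zipWith (fun _ b => h b) l1 l2 = l2.map h
  | _, [], _ => by simp
  | [], _ :: _, hl => by simp at hl
  | a :: l1, b :: l2, hl => by
    simp only [List.zipWith_cons_cons, List.map_cons]
    rw [zipWith_snd_of_le h l1 l2 (by simpa using hl)]

theorem dropLast_zipWith {α β γ : Type*} (f : α → β → γ) (l1 : List α) (l2 : List β)
    (h : l1.length = l2.length) :
    (List.zipWith f l1 l2).dropLast = List.zipWith f l1.dropLast l2.dropLast := by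
  rw [List.dropLast_eq_take, List.take_zipWith, List.length_zipWith, h, min_self,
    List.dropLast_eq_take, List.dropLast_eq_take, h]

theorem dropLast_zipWith_singleton {α β γ : Type*} (g : α → β → γ) (x : α) (l : List β) :
    (List.zipWith g [x] l).dropLast = [] := by
  cases l with
  | nil => rfl
  | cons y ys => cases ys <;> rfl

end Aux

namespace WD

variable {InX OutX InY OutY InZ OutZ : Type}
  {vInX : InX → Type u} {vOutX : OutX → Type u}
  {vInY : InY → Type u} {vOutY : OutY → Type u}
  {vInZ : InZ → Type u} {vOutZ : OutZ → Type u}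

theorem length_S' (φ : WD InX OutX InY OutY vInX vOutX vInY vOutY)
    (ℓ : List (∀ w, φ.vSup w)) : (φ.S' ℓ).length = ℓ.length :=
  List.length_map _

theorem length_S'' (φ : WD InX OutX InY OutY vInX vOutX vInY vOutY)
    (ℓ : List (∀ w : OutX ⊕ φ.D, Sum.elim vOutX φ.vD w)) :
    (φ.S'' ℓ).length = ℓ.length :=
  List.length_map _

theorem length_E (φ : WD InX OutX InY OutY vInX vOutX vInY vOutY)
    (f : List (∀ i, vInX i) → List (∀ o, vOutX o))
    (hf : ∀ ℓ, (f ℓ).length = ℓ.length + 1)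
    (ℓ : List (∀ w : InX ⊕ φ.D, Sum.elim vInX φ.vD w)) :
    (φ.E f ℓ).length = ℓ.length + 1 := by
  simp [E, hf, List.length_zipWith]
  erw [List.length_map, List.length_map, min_self]

theorem dropLast_S' (φ : WD InX OutX InY OutY vInX vOutX vInY vOutY)
    (ℓ : List (∀ w, φ.vSup w)) : (φ.S' ℓ).dropLast = φ.S' ℓ.dropLast :=
  List.map_dropLast.symm

theorem dropLast_S'' (φ : WD InX OutX InY OutY vInX vOutX vInY vOutY)
    (ℓ : List (∀ w : OutX ⊕ φ.D, Sum.elim vOutX φ.vD w)) :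
    (φ.S'' ℓ).dropLast = φ.S'' ℓ.dropLast :=
  List.map_dropLast.symm

theorem C_eq_of_ne_nil (φ : WD InX OutX InY OutY vInX vOutX vInY vOutY)
    (f : List (∀ i, vInX i) → List (∀ o, vOutX o))
    {ℓ : List (∀ i, vInY i)} (h : ℓ ≠ []) :
    φ.C f ℓ = List.zipWith glue ℓ (φ.E f (φ.S' (φ.C f ℓ.dropLast))) := by
  cases ℓ with
  | nil => exact absurd rfl h
  | cons a as => rw [C]; rfl

theorem length_C (φ : WD InX OutX InY OutY vInX vOutX vInY vOutY)
    (f : List (∀ i, vInX i) → List (∀ o, vOutX o))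
    (hf : ∀ ℓ, (f ℓ).length = ℓ.length + 1) :
    ∀ ℓ : List (∀ i, vInY i), (φ.C f ℓ).length = ℓ.length
  | [] => by simp [C]
  | a :: as => by
    rw [C]
    erw [List.length_zipWith, length_E φ f hf, length_S',
      length_C φ f hf (a :: as).dropLast]
    simp
termination_by ℓ => ℓ.length
decreasing_by simp [List.length_dropLast]

theorem dropLast_E (φ : WD InX OutX InY OutY vInX vOutX vInY vOutY)
    (f : List (∀ i, vInX i) → List (∀ o, vOutX o))
    (hf : Historical 1 f)
    {ℓ : List (∀ w : InX ⊕ φ.D, Sum.elim vInX φ.vD w)} (h : ℓ ≠ []) :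
    (φ.E f ℓ).dropLast = φ.E f ℓ.dropLast := by
  obtain ⟨x, ℓ', rfl⟩ : ∃ x ℓ', ℓ = x :: ℓ' := by
    cases ℓ with
    | nil => exact absurd rfl h
    | cons x ℓ' => exact ⟨x, ℓ', rfl⟩
  show (List.zipWith glue _ _).dropLast = _
  rw [dropLast_zipWith _ _ _ (by simp [hf.1]; erw [List.length_map, List.length_map])]
  rw [hf.2 _ (by erw [List.length_map]; simp)]
  congr 1
  · erw [← List.map_dropLast]
  · erw [List.map_dropLast]
    rfl

theorem dropLast_C (φ : WD InX OutX InY OutY vInX vOutX vInY vOutY)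
    (f : List (∀ i, vInX i) → List (∀ o, vOutX o))
    (hf : Historical 1 f) :
    ∀ ℓ : List (∀ i, vInY i), (φ.C f ℓ).dropLast = φ.C f ℓ.dropLast
  | [] => by simp [C]
  | [a] => by
    have h0 : φ.C f ([a] : List (∀ i, vInY i)).dropLast = [] := by
      rw [show ([a] : List (∀ i, vInY i)).dropLast = [] from rfl, C]
    rw [C, h0]; erw [dropLast_zipWith_singleton]
  | a :: b :: as => by
    have hlen : (a :: b :: as).length = (φ.E f (φ.S' (φ.C f (a :: b :: as).dropLast))).length := by
      rw [length_E φ f hf.1, length_S', length_C φ f hf.1]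
      simp
    have hne : (a :: b :: as).dropLast ≠ [] := by
      rw [List.dropLast_cons₂]; exact List.cons_ne_nil _ _
    have hS : φ.S' (φ.C f (a :: b :: as).dropLast) ≠ [] := by
      intro hc
      have := congrArg List.length hc
      rw [length_S', length_C φ f hf.1] at this
      simp at this
    have hE : (φ.E f (φ.S' (φ.C f (a :: b :: as).dropLast))).dropLast
        = φ.E f (φ.S' (φ.C f ((a :: b :: as).dropLast).dropLast)) := by
      rw [dropLast_E φ f hf hS, dropLast_S', dropLast_C φ f hf (a :: b :: as).dropLast]
    rw [C_eq_of_ne_nil φ f (List.cons_ne_nil _ _),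
      ]
    erw [dropLast_zipWith _ _ _ hlen]
    rw [hE]
    exact (C_eq_of_ne_nil φ f hne).symm
termination_by ℓ => ℓ.length
decreasing_by simp [List.length_dropLast]

theorem hist_P (φ : WD InX OutX InY OutY vInX vOutX vInY vOutY)
    (f : List (∀ i, vInX i) → List (∀ o, vOutX o))
    (hf : Historical 1 f) : Historical 1 (φ.P f) := by
  constructor
  · intro ℓ
    rw [P, length_S'', length_E φ f hf.1, length_S', length_C φ f hf.1]
  · intro ℓ hℓ
    have hCne : φ.S' (φ.C f ℓ) ≠ [] := by
      intro hc
      have h2 := congrArg List.length hc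
      rw [length_S', length_C φ f hf.1] at h2
      simp only [List.length_nil] at h2
      omega
    simp only [P]
    rw [dropLast_S'', dropLast_E φ f hf hCne, dropLast_S', dropLast_C φ f hf]

end WD


section Aux2

theorem map_zipWith_glue_fst {α β : Type} {F : α → Type u} {G : β → Type u} {γ : Type*}
    (h : (∀ w : α ⊕ β, Sum.elim F G w) → γ) (k : (∀ a, F a) → γ)
    (hk : ∀ (s : ∀ a, F a) (w : ∀ b, G b), h (glue s w) = k s) :
    ∀ (l1 : List (∀ a, F a)) (l2 : List (∀ b, G b)), l1.length ≤ l2.length →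
      (List.zipWith glue l1 l2).map h = l1.map k
  | [], _, _ => rfl
  | _ :: _, [], hl => by simp at hl
  | x :: l1, y :: l2, hl => by
    simp only [List.zipWith_cons_cons, List.map_cons]
    rw [hk, map_zipWith_glue_fst h k hk l1 l2 (by simpa using hl)]

theorem map_zipWith_glue_snd {α β : Type} {F : α → Type u} {G : β → Type u} {γ : Type*}
    (h : (∀ w : α ⊕ β, Sum.elim F G w) → γ) (k : (∀ b, G b) → γ)
    (hk : ∀ (s : ∀ a, F a) (w : ∀ b, G b), h (glue s w) = k w) :
    ∀ (l1 : List (∀ a, F a)) (l2 : List (∀ b, G b)), l2.length ≤ l1.length →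
      (List.zipWith glue l1 l2).map h = l2.map k
  | _, [], _ => by simp
  | [], _ :: _, hl => by simp at hl
  | x :: l1, y :: l2, hl => by
    simp only [List.zipWith_cons_cons, List.map_cons]
    rw [hk, map_zipWith_glue_snd h k hk l1 l2 (by simpa using hl)]

theorem map_zipWith_glue_both {α β α' β' : Type} {F : α → Type u} {G : β → Type u}
    {F' : α' → Type u} {G' : β' → Type u}
    (h : (∀ w : α ⊕ β, Sum.elim F G w) → ∀ w : α' ⊕ β', Sum.elim F' G' w)
    (k1 : (∀ a, F a) → ∀ a', F' a') (k2 : (∀ b, G b) → ∀ b', G' b')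
    (hk : ∀ s w, h (glue s w) = glue (k1 s) (k2 w)) :
    ∀ (l1 : List (∀ a, F a)) (l2 : List (∀ b, G b)),
      (List.zipWith glue l1 l2).map h = List.zipWith glue (l1.map k1) (l2.map k2)
  | [], [] => rfl
  | [], _ :: _ => rfl
  | _ :: _, [] => rfl
  | x :: l1, y :: l2 => by
    simp only [List.zipWith_cons_cons, List.map_cons]
    rw [hk, map_zipWith_glue_both h k1 k2 hk l1 l2]

end Aux2

namespace WD

variable {InX OutX InY OutY InZ OutZ : Type}
  {vInX : InX → Type u} {vOutX : OutX → Type u}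
  {vInY : InY → Type u} {vOutY : OutY → Type u}
  {vInZ : InZ → Type u} {vOutZ : OutZ → Type u}

/-- Projection of a tuple of values on `inSup(ψ∘φ) = OutX ⊔ (D_φ ⊔ D_ψ)` onto
`inSup(φ) = OutX ⊔ D_φ`. -/
def projD1 (ψ : WD InY OutY InZ OutZ vInY vOutY vInZ vOutZ)
    (φ : WD InX OutX InY OutY vInX vOutX vInY vOutY)
    (e : ∀ w : OutX ⊕ (φ.D ⊕ ψ.D), Sum.elim vOutX (Sum.elim φ.vD ψ.vD) w) :
    ∀ w : OutX ⊕ φ.D, Sum.elim vOutX φ.vD w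
  | Sum.inl o => e (Sum.inl o)
  | Sum.inr d => e (Sum.inr (Sum.inl d))

def dInl (ψ : WD InY OutY InZ OutZ vInY vOutY vInZ vOutZ)
    (φ : WD InX OutX InY OutY vInX vOutX vInY vOutY)
    (e : ∀ w : φ.D ⊕ ψ.D, Sum.elim φ.vD ψ.vD w) : ∀ d : φ.D, φ.vD d :=
  fun d => e (Sum.inl d)

def piD (ψ : WD InY OutY InZ OutZ vInY vOutY vInZ vOutZ)
    (φ : WD InX OutX InY OutY vInX vOutX vInY vOutY)
    (x : ∀ w : InX ⊕ (φ.D ⊕ ψ.D), Sum.elim vInX (Sum.elim φ.vD ψ.vD) w) :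
    ∀ w : φ.D ⊕ ψ.D, Sum.elim φ.vD ψ.vD w :=
  fun d => x (Sum.inr d)

def piInX (ψ : WD InY OutY InZ OutZ vInY vOutY vInZ vOutZ)
    (φ : WD InX OutX InY OutY vInX vOutX vInY vOutY)
    (x : ∀ w : InX ⊕ (φ.D ⊕ ψ.D), Sum.elim vInX (Sum.elim φ.vD ψ.vD) w) :
    ∀ i, vInX i :=
  fun i => x (Sum.inl i)

def piXInX (φ : WD InX OutX InY OutY vInX vOutX vInY vOutY)
    (x : ∀ w : InX ⊕ φ.D, Sum.elim vInX φ.vD w) : ∀ i, vInX i :=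
  fun i => x (Sum.inl i)

def piXD (φ : WD InX OutX InY OutY vInX vOutX vInY vOutY)
    (x : ∀ w : InX ⊕ φ.D, Sum.elim vInX φ.vD w) : ∀ d, φ.vD d :=
  fun d => x (Sum.inr d)

theorem key (ψ : WD InY OutY InZ OutZ vInY vOutY vInZ vOutZ)
    (φ : WD InX OutX InY OutY vInX vOutX vInY vOutY)
    (f : List (∀ i, vInX i) → List (∀ o, vOutX o)) (hf : Historical 1 f)
    (N : List (∀ w : InY ⊕ ψ.D, Sum.elim vInY ψ.vD w)) :
    ((ψ.comp φ).E f
        ((prodMap φ.S' (id : List (∀ d, ψ.vD d) → List (∀ d, ψ.vD d))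
          (prodMap (φ.C f) (id : List (∀ d, ψ.vD d) → List (∀ d, ψ.vD d)) N)).map
            (reassocDem ψ φ))).map (projD1 ψ φ)
      = φ.E f (φ.S' (φ.C f (N.map fun x i => x (Sum.inl i)))) := by
  have hAlen : (φ.C f (N.map fun x i => x (Sum.inl i))).length
      = (N.map fun x d => x (Sum.inr d)).length := by
    erw [length_C φ f hf.1, List.length_map, List.length_map]
  have hlen : (φ.S' (φ.C f (N.map fun x i => x (Sum.inl i)))).length
      = (N.map fun x d => x (Sum.inr d)).length := by
    rw [length_S', hAlen]
  have e1 : ((List.zipWith glue (φ.C f (N.map fun x i => x (Sum.inl i)))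
        (N.map fun x d => x (Sum.inr d))).map fun x a => x (Sum.inl a))
      = φ.C f (N.map fun x i => x (Sum.inl i)) :=
    (map_zipWith_glue_fst _ id (fun s w => rfl) _ _ (le_of_eq hAlen)).trans (List.map_id _)
  have e2 : ((List.zipWith glue (φ.C f (N.map fun x i => x (Sum.inl i)))
        (N.map fun x d => x (Sum.inr d))).map fun x b => x (Sum.inr b))
      = N.map fun x d => x (Sum.inr d) :=
    (map_zipWith_glue_snd _ id (fun s w => rfl) _ _ (le_of_eq hAlen.symm)).trans (List.map_id _)
  have hstep : prodMap φ.S' (id : List (∀ d, ψ.vD d) → List (∀ d, ψ.vD d))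
      (prodMap (φ.C f) (id : List (∀ d, ψ.vD d) → List (∀ d, ψ.vD d)) N)
      = List.zipWith glue (φ.S' (φ.C f (N.map fun x i => x (Sum.inl i))))
          (N.map fun x d => x (Sum.inr d)) := by
    have h0 : prodMap φ.S' (id : List (∀ d, ψ.vD d) → List (∀ d, ψ.vD d))
        (prodMap (φ.C f) (id : List (∀ d, ψ.vD d) → List (∀ d, ψ.vD d)) N)
        = List.zipWith glue
            (φ.S' (((List.zipWith glue (φ.C f (N.map fun x i => x (Sum.inl i)))
              (N.map fun x d => x (Sum.inr d))).map fun x a => x (Sum.inl a) :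
                List (∀ w, φ.vSup w))))
            (((List.zipWith glue (φ.C f (N.map fun x i => x (Sum.inl i)))
              (N.map fun x d => x (Sum.inr d))).map fun x b => x (Sum.inr b) :
                List (∀ d, ψ.vD d))) := rfl
    erw [h0, e1, e2]
    rfl
  have hπ1 : (((List.zipWith glue (φ.S' (φ.C f (N.map fun x i => x (Sum.inl i))))
        (N.map fun x d => x (Sum.inr d))).map (reassocDem ψ φ)).map (piInX ψ φ))
      = (φ.S' (φ.C f (N.map fun x i => x (Sum.inl i)))).map (piXInX φ) := by
    rw [List.map_map]
    exact map_zipWith_glue_fst _ _ (fun s w => rfl) _ _ (le_of_eq hlen)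
  have hπ2 : ((((List.zipWith glue (φ.S' (φ.C f (N.map fun x i => x (Sum.inl i))))
        (N.map fun x d => x (Sum.inr d))).map (reassocDem ψ φ)).map (piD ψ φ)).map (dInl ψ φ))
      = (φ.S' (φ.C f (N.map fun x i => x (Sum.inl i)))).map (piXD φ) := by
    rw [List.map_map, List.map_map]
    exact map_zipWith_glue_fst _ _ (fun s w => rfl) _ _ (le_of_eq hlen)
  have k1 : ((ψ.comp φ).E f
        ((prodMap φ.S' (id : List (∀ d, ψ.vD d) → List (∀ d, ψ.vD d))
          (prodMap (φ.C f) (id : List (∀ d, ψ.vD d) → List (∀ d, ψ.vD d)) N)).map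
            (reassocDem ψ φ))).map (projD1 ψ φ)
      = ((ψ.comp φ).E f
          ((List.zipWith glue (φ.S' (φ.C f (N.map fun x i => x (Sum.inl i))))
            (N.map fun x d => x (Sum.inr d))).map (reassocDem ψ φ))).map (projD1 ψ φ) := by
    erw [hstep]
    rfl
  have k2 : ((ψ.comp φ).E f
        ((List.zipWith glue (φ.S' (φ.C f (N.map fun x i => x (Sum.inl i))))
          (N.map fun x d => x (Sum.inr d))).map (reassocDem ψ φ))).map (projD1 ψ φ)
      = (List.zipWith glue
          (f (((List.zipWith glue (φ.S' (φ.C f (N.map fun x i => x (Sum.inl i))))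
            (N.map fun x d => x (Sum.inr d))).map (reassocDem ψ φ)).map (piInX ψ φ)))
          ((ψ.comp φ).dD :: ((List.zipWith glue (φ.S' (φ.C f (N.map fun x i => x (Sum.inl i))))
            (N.map fun x d => x (Sum.inr d))).map (reassocDem ψ φ)).map (piD ψ φ))).map
              (projD1 ψ φ) := rfl
  have k3 : (List.zipWith glue
        (f (((List.zipWith glue (φ.S' (φ.C f (N.map fun x i => x (Sum.inl i))))
          (N.map fun x d => x (Sum.inr d))).map (reassocDem ψ φ)).map (piInX ψ φ)))
        ((ψ.comp φ).dD :: ((List.zipWith glue (φ.S' (φ.C f (N.map fun x i => x (Sum.inl i))))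
          (N.map fun x d => x (Sum.inr d))).map (reassocDem ψ φ)).map (piD ψ φ))).map
            (projD1 ψ φ)
      = List.zipWith glue
          ((f (((List.zipWith glue (φ.S' (φ.C f (N.map fun x i => x (Sum.inl i))))
            (N.map fun x d => x (Sum.inr d))).map (reassocDem ψ φ)).map (piInX ψ φ))).map id)
          (((ψ.comp φ).dD :: ((List.zipWith glue (φ.S' (φ.C f (N.map fun x i => x (Sum.inl i))))
            (N.map fun x d => x (Sum.inr d))).map (reassocDem ψ φ)).map (piD ψ φ)).map
              (dInl ψ φ)) :=
    map_zipWith_glue_both (projD1 ψ φ) id (dInl ψ φ)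
      (fun c e => funext fun w => by cases w <;> rfl) _ _
  have k4 : List.zipWith glue
        ((f (((List.zipWith glue (φ.S' (φ.C f (N.map fun x i => x (Sum.inl i))))
          (N.map fun x d => x (Sum.inr d))).map (reassocDem ψ φ)).map (piInX ψ φ))).map id)
        (((ψ.comp φ).dD :: ((List.zipWith glue (φ.S' (φ.C f (N.map fun x i => x (Sum.inl i))))
          (N.map fun x d => x (Sum.inr d))).map (reassocDem ψ φ)).map (piD ψ φ)).map
            (dInl ψ φ))
      = List.zipWith glue
          (f ((φ.S' (φ.C f (N.map fun x i => x (Sum.inl i)))).map (piXInX φ)))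
          (dInl ψ φ (ψ.comp φ).dD
            :: (φ.S' (φ.C f (N.map fun x i => x (Sum.inl i)))).map (piXD φ)) := by
    erw [List.map_id, List.map_cons, hπ1, hπ2]
  have k5 : List.zipWith glue
        (f ((φ.S' (φ.C f (N.map fun x i => x (Sum.inl i)))).map (piXInX φ)))
        (dInl ψ φ (ψ.comp φ).dD
          :: (φ.S' (φ.C f (N.map fun x i => x (Sum.inl i)))).map (piXD φ))
      = φ.E f (φ.S' (φ.C f (N.map fun x i => x (Sum.inl i)))) := rfl
  exact k1.trans (k2.trans (k3.trans (k4.trans k5)))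

end WD

open WD in
/-- Let `φ : X → Y`, `ψ : Y → Z` be wiring diagrams, `f ∈ P(X)`, `g = P(φ)(f)` and
`ω = ψ∘φ`.  Assuming the induction hypothesis
`S'_ω ∘ C_{ω,f} ∘ ∂ = (S'_φ × id) ∘ (C_{φ,f} × id) ∘ S'_ψ ∘ C_{ψ,g} ∘ ∂`,
one has `π_{⟪inSup φ⟫} ∘ C_{ω,f} = π_{⟪inSup φ⟫} ∘ C_{φ,f} ∘ π_{⟪In Y⟫} ∘ S'_ψ ∘ C_{ψ,g}`
as functions `⟪In Z⟫ → ⟪inSup φ⟫`, where `π` denotes entrywise coordinate projection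
onto the indicated wire coordinates. -/
theorem proj_cascade_comp {InX OutX InY OutY InZ OutZ : Type}
    [Fintype InX] [Fintype OutX] [Fintype InY] [Fintype OutY]
    [Fintype InZ] [Fintype OutZ]
    {vInX : InX → Type u} {vOutX : OutX → Type u}
    {vInY : InY → Type u} {vOutY : OutY → Type u}
    {vInZ : InZ → Type u} {vOutZ : OutZ → Type u}
    (φ : WD InX OutX InY OutY vInX vOutX vInY vOutY)
    (ψ : WD InY OutY InZ OutZ vInY vOutY vInZ vOutZ)
    (f : List (∀ i, vInX i) → List (∀ o, vOutX o))
    (hf : Historical 1 f)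
    (hIH : (fun ℓ : List (∀ z, vInZ z) =>
        (ψ.comp φ).S' ((ψ.comp φ).C f ℓ.dropLast))
      = fun ℓ : List (∀ z, vInZ z) =>
        (prodMap φ.S' (id : List (∀ d, ψ.vD d) → List (∀ d, ψ.vD d))
          (prodMap (φ.C f) (id : List (∀ d, ψ.vD d) → List (∀ d, ψ.vD d))
            (ψ.S' (ψ.C (φ.P f) ℓ.dropLast)))).map (reassocDem ψ φ)) :
    (fun ℓ : List (∀ z, vInZ z) => ((ψ.comp φ).C f ℓ).map (projInSupPhi ψ φ))
      = fun ℓ : List (∀ z, vInZ z) =>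
          (φ.C f ((ψ.S' (ψ.C (φ.P f) ℓ)).map fun x i => x (Sum.inl i))).map
            fun x w => x (Sum.inr w) := by
  funext ℓ
  cases ℓ with
  | nil =>
    simp [WD.C, WD.S']
    show [] = List.map _ (φ.C f [])
    rw [WD.C]
    rfl
  | cons a as =>
    have hg : Historical 1 (φ.P f) := WD.hist_P φ f hf
    have hmlen : ((ψ.S' (ψ.C (φ.P f) (a :: as))).map fun x i => x (Sum.inl i)).length
        = as.length + 1 := by
      rw [List.length_map, WD.length_S', WD.length_C ψ (φ.P f) hg.1, List.length_cons]
    have hmne : ((ψ.S' (ψ.C (φ.P f) (a :: as))).map fun x i => x (Sum.inl i)) ≠ [] := by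
      intro hc
      rw [hc] at hmlen
      simp at hmlen
    have hmd : ((ψ.S' (ψ.C (φ.P f) (a :: as))).map fun x i => x (Sum.inl i)).dropLast
        = (ψ.S' (ψ.C (φ.P f) (a :: as).dropLast)).map fun x i => x (Sum.inl i) := by
      rw [← List.map_dropLast, WD.dropLast_S', WD.dropLast_C ψ (φ.P f) hg]
    have hLlen : ((ψ.comp φ).E f
        ((ψ.comp φ).S' ((ψ.comp φ).C f (a :: as).dropLast))).length ≤ (a :: as).length := by
      rw [WD.length_E (ψ.comp φ) f hf.1, WD.length_S', WD.length_C (ψ.comp φ) f hf.1]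
      simp
    have hRlen : (φ.E f (φ.S' (φ.C f ((ψ.S' (ψ.C (φ.P f) (a :: as).dropLast)).map
          fun x i => x (Sum.inl i))))).length
        ≤ ((ψ.S' (ψ.C (φ.P f) (a :: as))).map fun x i => x (Sum.inl i)).length := by
      erw [hmlen, WD.length_E φ f hf.1, WD.length_S', WD.length_C φ f hf.1,
        List.length_map, WD.length_S', WD.length_C ψ (φ.P f) hg.1]
      simp
    have h1 : (ψ.comp φ).S' ((ψ.comp φ).C f (a :: as).dropLast)
        = (prodMap φ.S' (id : List (∀ d, ψ.vD d) → List (∀ d, ψ.vD d))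
            (prodMap (φ.C f) (id : List (∀ d, ψ.vD d) → List (∀ d, ψ.vD d))
              (ψ.S' (ψ.C (φ.P f) (a :: as).dropLast)))).map (reassocDem ψ φ) :=
      congrFun hIH (a :: as)
    have e1 : ((ψ.comp φ).C f (a :: as)).map (projInSupPhi ψ φ)
        = (List.zipWith glue (a :: as)
            ((ψ.comp φ).E f ((ψ.comp φ).S' ((ψ.comp φ).C f (a :: as).dropLast)))).map
              (projInSupPhi ψ φ) :=
      congrArg _ (WD.C_eq_of_ne_nil (ψ.comp φ) f (List.cons_ne_nil a as))
    have e2 : (List.zipWith glue (a :: as)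
          ((ψ.comp φ).E f ((ψ.comp φ).S' ((ψ.comp φ).C f (a :: as).dropLast)))).map
            (projInSupPhi ψ φ)
        = ((ψ.comp φ).E f ((ψ.comp φ).S' ((ψ.comp φ).C f (a :: as).dropLast))).map
            (WD.projD1 ψ φ) :=
      map_zipWith_glue_snd (projInSupPhi ψ φ) (WD.projD1 ψ φ)
        (fun c e => funext fun w => by cases w <;> rfl) _ _ hLlen
    have e3 : ((ψ.comp φ).E f ((ψ.comp φ).S' ((ψ.comp φ).C f (a :: as).dropLast))).map
          (WD.projD1 ψ φ)
        = ((ψ.comp φ).E f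
            ((prodMap φ.S' (id : List (∀ d, ψ.vD d) → List (∀ d, ψ.vD d))
              (prodMap (φ.C f) (id : List (∀ d, ψ.vD d) → List (∀ d, ψ.vD d))
                (ψ.S' (ψ.C (φ.P f) (a :: as).dropLast)))).map (reassocDem ψ φ))).map
              (WD.projD1 ψ φ) := by
      erw [h1]
      rfl
    have e4 := WD.key ψ φ f hf (ψ.S' (ψ.C (φ.P f) (a :: as).dropLast))
    have e5a : (φ.C f ((ψ.S' (ψ.C (φ.P f) (a :: as))).map fun x i => x (Sum.inl i))).map
          (fun x w => x (Sum.inr w))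
        = (List.zipWith glue ((ψ.S' (ψ.C (φ.P f) (a :: as))).map fun x i => x (Sum.inl i))
            (φ.E f (φ.S' (φ.C f (((ψ.S' (ψ.C (φ.P f) (a :: as))).map
              fun x i => x (Sum.inl i)).dropLast))))).map (fun x w => x (Sum.inr w)) :=
      congrArg _ (WD.C_eq_of_ne_nil φ f hmne)
    have e5b : (List.zipWith glue ((ψ.S' (ψ.C (φ.P f) (a :: as))).map fun x i => x (Sum.inl i))
          (φ.E f (φ.S' (φ.C f (((ψ.S' (ψ.C (φ.P f) (a :: as))).map
            fun x i => x (Sum.inl i)).dropLast))))).map (fun x w => x (Sum.inr w))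
        = (List.zipWith glue ((ψ.S' (ψ.C (φ.P f) (a :: as))).map fun x i => x (Sum.inl i))
            (φ.E f (φ.S' (φ.C f ((ψ.S' (ψ.C (φ.P f) (a :: as).dropLast)).map
              fun x i => x (Sum.inl i)))))).map (fun x w => x (Sum.inr w)) := by
      erw [hmd]
      rfl
    have e5c : (List.zipWith glue ((ψ.S' (ψ.C (φ.P f) (a :: as))).map fun x i => x (Sum.inl i))
          (φ.E f (φ.S' (φ.C f ((ψ.S' (ψ.C (φ.P f) (a :: as).dropLast)).map
            fun x i => x (Sum.inl i)))))).map (fun x w => x (Sum.inr w))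
        = φ.E f (φ.S' (φ.C f ((ψ.S' (ψ.C (φ.P f) (a :: as).dropLast)).map
            fun x i => x (Sum.inl i)))) :=
      (map_zipWith_glue_snd _ id (fun c e => rfl) _ _ hRlen).trans (List.map_id _)
    exact (e1.trans (e2.trans (e3.trans e4))).trans
      ((e5a.trans (e5b.trans e5c)).symm)
end
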